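/- In the sedenion algebra 𝕊, with α = e₁ + e₁₀ and β = e₇ + e₁₂, the linear polynomial f(x) = α x − β has no root in 𝕊. Consequently, 𝕊 is not algebraically closed in the sense that some nonconstant polynomials over 𝕊 have no roots. -/

import Mathlib

/-- Cayley–Dickson double (with γ = -1) of an algebra with involution. -/
def CD (A : Type*) : Type _ := A × A

namespace CD

variable {A : Type*}

instance [AddCommGroup A] : AddCommGroup (CD A) := inferInstanceAs (AddCommGroup (A × A))
noncomputable instance [AddCommGroup A] [Module ℝ A] : Module ℝ (CD A) :=
  inferInstanceAs (Module ℝ (A × A))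

/-- Build an element of the double from its two halves. -/
def mk (a b : A) : CD A := (a, b)

section
set_option linter.unusedSectionVars false

/-- A star operation fixing `1`. -/
class StarOne (A : Type*) [One A] [Star A] : Prop where
  star_one : star (1 : A) = 1

variable [NonAssocRing A] [StarAddMonoid A] [StarOne A]

instance : One (CD A) := ⟨((1 : A), 0)⟩
instance : Mul (CD A) :=
  ⟨fun x y => (x.1 * y.1 - star y.2 * x.2, y.2 * x.1 + x.2 * star y.1)⟩
instance : Star (CD A) := ⟨fun x => (star x.1, -x.2)⟩

lemma mul_def (x y : CD A) :
    x * y = (x.1 * y.1 - star y.2 * x.2, y.2 * x.1 + x.2 * star y.1) := rfl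
lemma one_def : (1 : CD A) = ((1 : A), 0) := rfl
lemma star_def (x : CD A) : star x = (star x.1, -x.2) := rfl
lemma add_def (x y : CD A) : x + y = (x.1 + y.1, x.2 + y.2) := rfl
lemma zero_def : (0 : CD A) = ((0 : A), 0) := rfl

instance instNonAssocRing : NonAssocRing (CD A) where
  __ := (inferInstance : AddCommGroup (CD A))
  left_distrib a b c := by
    refine Prod.ext ?_ ?_
    · show a.1 * (b.1 + c.1) - star (b.2 + c.2) * a.2 =
        (a.1 * b.1 - star b.2 * a.2) + (a.1 * c.1 - star c.2 * a.2)
      rw [star_add]; noncomm_ring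
    · show (b.2 + c.2) * a.1 + a.2 * star (b.1 + c.1) =
        (b.2 * a.1 + a.2 * star b.1) + (c.2 * a.1 + a.2 * star c.1)
      rw [star_add]; noncomm_ring
  right_distrib a b c := by
    refine Prod.ext ?_ ?_
    · show (a.1 + b.1) * c.1 - star c.2 * (a.2 + b.2) =
        (a.1 * c.1 - star c.2 * a.2) + (b.1 * c.1 - star c.2 * b.2)
      noncomm_ring
    · show c.2 * (a.1 + b.1) + (a.2 + b.2) * star c.1 =
        (c.2 * a.1 + a.2 * star c.1) + (c.2 * b.1 + b.2 * star c.1)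
      noncomm_ring
  zero_mul a := by
    refine Prod.ext ?_ ?_
    · show (0 : A) * a.1 - star a.2 * 0 = 0
      simp
    · show a.2 * 0 + (0 : A) * star a.1 = 0
      simp
  mul_zero a := by
    refine Prod.ext ?_ ?_
    · show a.1 * 0 - star (0 : A) * a.2 = 0
      simp
    · show (0 : A) * a.1 + a.2 * star (0 : A) = 0
      simp
  one_mul a := by
    refine Prod.ext ?_ ?_
    · show (1 : A) * a.1 - star a.2 * 0 = a.1
      simp
    · show a.2 * 1 + (0 : A) * star a.1 = a.2
      simp
  mul_one a := by
    refine Prod.ext ?_ ?_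
    · show a.1 * 1 - star (0 : A) * a.2 = a.1
      simp
    · show (0 : A) * a.1 + a.2 * star (1 : A) = a.2
      simp [StarOne.star_one]

instance instStarAddMonoid : StarAddMonoid (CD A) where
  star_involutive x := by
    refine Prod.ext ?_ ?_
    · show star (star x.1) = x.1
      simp
    · show -(-x.2) = x.2
      simp
  star_add x y := by
    refine Prod.ext ?_ ?_
    · show star (x.1 + y.1) = star x.1 + star y.1
      simp
    · show -(x.2 + y.2) = -x.2 + -y.2
      abel

instance instStarOne : StarOne (CD A) :=
  ⟨Prod.ext (StarOne.star_one) (show -(0 : A) = 0 by simp)⟩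

end

end CD

instance : CD.StarOne ℝ := ⟨by simp⟩

/-- The real octonions, as a three-fold Cayley–Dickson double of ℝ. -/
def Octonion : Type := CD (CD (CD ℝ))

instance : NonAssocRing Octonion := inferInstanceAs (NonAssocRing (CD (CD (CD ℝ))))
instance : StarAddMonoid Octonion := inferInstanceAs (StarAddMonoid (CD (CD (CD ℝ))))
instance : CD.StarOne Octonion := inferInstanceAs (CD.StarOne (CD (CD (CD ℝ))))
noncomputable instance : Module ℝ Octonion := inferInstanceAs (Module ℝ (CD (CD (CD ℝ))))

/-- The real sedenions, as the Cayley–Dickson double of the octonions. -/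
def Sedenion : Type := CD Octonion

instance : NonAssocRing Sedenion := inferInstanceAs (NonAssocRing (CD Octonion))
instance : StarAddMonoid Sedenion := inferInstanceAs (StarAddMonoid (CD Octonion))
instance : CD.StarOne Sedenion := inferInstanceAs (CD.StarOne (CD Octonion))
noncomputable instance : Module ℝ Sedenion := inferInstanceAs (Module ℝ (CD Octonion))

/-- Assemble a complex number, quaternion, octonion, sedenion from real coordinates. -/
def mkC (f : ℕ → ℝ) (k : ℕ) : CD ℝ := CD.mk (f k) (f (k+1))
def mkH (f : ℕ → ℝ) (k : ℕ) : CD (CD ℝ) := CD.mk (mkC f k) (mkC f (k+2))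
def mkO (f : ℕ → ℝ) (k : ℕ) : Octonion := CD.mk (mkH f k) (mkH f (k+4))
def mkS (f : ℕ → ℝ) : Sedenion := CD.mk (mkO f 0) (mkO f 8)

/-- The standard basis `e₀, …, e₁₅` of the sedenions. -/
def sE (n : ℕ) : Sedenion := mkS (fun k => if k = n then 1 else 0)

/-- The standard basis `e₀, …, e₇` of the octonions. -/
def oE (n : ℕ) : Octonion := mkO (fun k => if k = n then 1 else 0) 0

/-- Powers in a (power-associative) non-associative algebra. -/
def cdpow {A : Type*} [One A] [Mul A] (x : A) : ℕ → A
  | 0 => 1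
  | n+1 => cdpow x n * x


section Aux
set_option linter.unusedSectionVars false
variable {A : Type*} [NonAssocRing A] [StarAddMonoid A] [CD.StarOne A]

lemma cd_mul_def' (x y : CD A) :
    x * y = (x.1 * y.1 - star y.2 * x.2, y.2 * x.1 + x.2 * star y.1) := rfl
lemma cd_star_def' (x : CD A) : star x = (star x.1, -x.2) := rfl
lemma cd_add_def' (x y : CD A) : x + y = (x.1 + y.1, x.2 + y.2) := rfl
lemma cd_sub_def' (x y : CD A) : x - y = (x.1 - y.1, x.2 - y.2) := rfl
lemma cd_neg_def' (x : CD A) : -x = (-x.1, -x.2) := rfl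
lemma cd_mk_fst' (a b : A) : (CD.mk a b).1 = a := rfl
lemma cd_mk_snd' (a b : A) : (CD.mk a b).2 = b := rfl
lemma cd_mul_mk' (x y : CD A) :
    x * y = CD.mk (x.1 * y.1 - star y.2 * x.2) (y.2 * x.1 + x.2 * star y.1) := rfl
lemma cd_star_mk' (x : CD A) : star x = CD.mk (star x.1) (-x.2) := rfl
lemma cd_add_mk' (x y : CD A) : x + y = CD.mk (x.1 + y.1) (x.2 + y.2) := rfl
lemma cd_sub_mk' (x y : CD A) : x - y = CD.mk (x.1 - y.1) (x.2 - y.2) := rfl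
lemma cd_neg_mk' (x : CD A) : -x = CD.mk (-x.1) (-x.2) := rfl

end Aux

/-- In the sedenions, with `α = e₁ + e₁₀` and `β = e₇ + e₁₂`, the linear
polynomial `f(x) = α x - β` has no root in `𝕊`. Consequently `𝕊` is not algebraically
closed: there is a nonconstant (linear, with nonzero leading coefficient) polynomial over
`𝕊` with no roots. -/
theorem stmt6 :
    (¬ ∃ x : Sedenion, (sE 1 + sE 10) * x - (sE 7 + sE 12) = 0) ∧
    ∃ a b : Sedenion, a ≠ 0 ∧ ¬ ∃ x : Sedenion, a * x + b = 0 := by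
  have key : ¬ ∃ x : Sedenion, (sE 1 + sE 10) * x - (sE 7 + sE 12) = 0 := by
    rintro ⟨x, hx⟩
    obtain ⟨x, rfl⟩ : ∃ y : CD (CD (CD (CD ℝ))), y = x := ⟨x, rfl⟩
    rw [sub_eq_zero] at hx
    have hα : sE 1 + sE 10 = (CD.mk (CD.mk (CD.mk (CD.mk ((0:ℝ) + (0:ℝ)) ((1:ℝ) + (0:ℝ))) (CD.mk ((0:ℝ) + (0:ℝ)) ((0:ℝ) + (0:ℝ)))) (CD.mk (CD.mk ((0:ℝ) + (0:ℝ)) ((0:ℝ) + (0:ℝ))) (CD.mk ((0:ℝ) + (0:ℝ)) ((0:ℝ) + (0:ℝ))))) (CD.mk (CD.mk (CD.mk ((0:ℝ) + (0:ℝ)) ((0:ℝ) + (0:ℝ))) (CD.mk ((0:ℝ) + (1:ℝ)) ((0:ℝ) + (0:ℝ)))) (CD.mk (CD.mk ((0:ℝ) + (0:ℝ)) ((0:ℝ) + (0:ℝ))) (CD.mk ((0:ℝ) + (0:ℝ)) ((0:ℝ) + (0:ℝ))))) : Sedenion) := rfl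
    have hβ : sE 7 + sE 12 = (CD.mk (CD.mk (CD.mk (CD.mk ((0:ℝ) + (0:ℝ)) ((0:ℝ) + (0:ℝ))) (CD.mk ((0:ℝ) + (0:ℝ)) ((0:ℝ) + (0:ℝ)))) (CD.mk (CD.mk ((0:ℝ) + (0:ℝ)) ((0:ℝ) + (0:ℝ))) (CD.mk ((0:ℝ) + (0:ℝ)) ((1:ℝ) + (0:ℝ))))) (CD.mk (CD.mk (CD.mk ((0:ℝ) + (0:ℝ)) ((0:ℝ) + (0:ℝ))) (CD.mk ((0:ℝ) + (0:ℝ)) ((0:ℝ) + (0:ℝ)))) (CD.mk (CD.mk ((0:ℝ) + (1:ℝ)) ((0:ℝ) + (0:ℝ))) (CD.mk ((0:ℝ) + (0:ℝ)) ((0:ℝ) + (0:ℝ))))) : Sedenion) := rfl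
    norm_num at hα hβ
    rw [hα, hβ] at hx
    have hx' : ((CD.mk (CD.mk (CD.mk (CD.mk (0:ℝ) (1:ℝ)) (CD.mk (0:ℝ) (0:ℝ))) (CD.mk (CD.mk (0:ℝ) (0:ℝ)) (CD.mk (0:ℝ) (0:ℝ)))) (CD.mk (CD.mk (CD.mk (0:ℝ) (0:ℝ)) (CD.mk (1:ℝ) (0:ℝ))) (CD.mk (CD.mk (0:ℝ) (0:ℝ)) (CD.mk (0:ℝ) (0:ℝ)))) : CD (CD (CD (CD ℝ))))) * (show CD (CD (CD (CD ℝ))) from x) = (CD.mk (CD.mk (CD.mk (CD.mk (0:ℝ) (0:ℝ)) (CD.mk (0:ℝ) (0:ℝ))) (CD.mk (CD.mk (0:ℝ) (0:ℝ)) (CD.mk (0:ℝ) (1:ℝ)))) (CD.mk (CD.mk (CD.mk (0:ℝ) (0:ℝ)) (CD.mk (0:ℝ) (0:ℝ))) (CD.mk (CD.mk (1:ℝ) (0:ℝ)) (CD.mk (0:ℝ) (0:ℝ)))) : CD (CD (CD (CD ℝ)))) := hx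
    simp only [cd_mul_mk', cd_star_mk', cd_add_mk', cd_sub_mk', cd_neg_mk', cd_mk_fst', cd_mk_snd'] at hx'
    simp only [CD.mk, cd_mul_def', cd_star_def', cd_add_def', cd_sub_def', cd_neg_def',
      CD.mul_def, CD.star_def, CD.add_def, Prod.mk.injEq, star_trivial] at hx'
    have e0 := congrArg (fun p : CD (CD (CD (CD ℝ))) => p.1.1.1.1) hx'
    have e1 := congrArg (fun p : CD (CD (CD (CD ℝ))) => p.1.1.1.2) hx'
    have e2 := congrArg (fun p : CD (CD (CD (CD ℝ))) => p.1.1.2.1) hx'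
    have e3 := congrArg (fun p : CD (CD (CD (CD ℝ))) => p.1.1.2.2) hx'
    have e4 := congrArg (fun p : CD (CD (CD (CD ℝ))) => p.1.2.1.1) hx'
    have e5 := congrArg (fun p : CD (CD (CD (CD ℝ))) => p.1.2.1.2) hx'
    have e6 := congrArg (fun p : CD (CD (CD (CD ℝ))) => p.1.2.2.1) hx'
    have e7 := congrArg (fun p : CD (CD (CD (CD ℝ))) => p.1.2.2.2) hx'
    have e8 := congrArg (fun p : CD (CD (CD (CD ℝ))) => p.2.1.1.1) hx'
    have e9 := congrArg (fun p : CD (CD (CD (CD ℝ))) => p.2.1.1.2) hx'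
    have e10 := congrArg (fun p : CD (CD (CD (CD ℝ))) => p.2.1.2.1) hx'
    have e11 := congrArg (fun p : CD (CD (CD (CD ℝ))) => p.2.1.2.2) hx'
    have e12 := congrArg (fun p : CD (CD (CD (CD ℝ))) => p.2.2.1.1) hx'
    have e13 := congrArg (fun p : CD (CD (CD (CD ℝ))) => p.2.2.1.2) hx'
    have e14 := congrArg (fun p : CD (CD (CD (CD ℝ))) => p.2.2.2.1) hx'
    have e15 := congrArg (fun p : CD (CD (CD (CD ℝ))) => p.2.2.2.2) hx'
    simp only at e0 e1 e2 e3 e4 e5 e6 e7 e8 e9 e10 e11 e12 e13 e14 e15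
    linarith [e0, e1, e2, e3, e4, e5, e6, e7, e8, e9, e10, e11, e12, e13, e14, e15]
  refine ⟨key, sE 1 + sE 10, -(sE 7 + sE 12), ?_, ?_⟩
  · intro h
    have hα : sE 1 + sE 10 = (CD.mk (CD.mk (CD.mk (CD.mk ((0:ℝ) + (0:ℝ)) ((1:ℝ) + (0:ℝ))) (CD.mk ((0:ℝ) + (0:ℝ)) ((0:ℝ) + (0:ℝ)))) (CD.mk (CD.mk ((0:ℝ) + (0:ℝ)) ((0:ℝ) + (0:ℝ))) (CD.mk ((0:ℝ) + (0:ℝ)) ((0:ℝ) + (0:ℝ))))) (CD.mk (CD.mk (CD.mk ((0:ℝ) + (0:ℝ)) ((0:ℝ) + (0:ℝ))) (CD.mk ((0:ℝ) + (1:ℝ)) ((0:ℝ) + (0:ℝ)))) (CD.mk (CD.mk ((0:ℝ) + (0:ℝ)) ((0:ℝ) + (0:ℝ))) (CD.mk ((0:ℝ) + (0:ℝ)) ((0:ℝ) + (0:ℝ))))) : Sedenion) := rfl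
    norm_num at hα
    rw [hα] at h
    have h2 := congrArg (fun s : Sedenion => s.1.1.1.2) h
    simp only [CD.mk] at h2
    exact one_ne_zero h2
  · rintro ⟨x, hx⟩
    rw [← sub_eq_add_neg] at hx
    exact key ⟨x, hx⟩
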